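/- For nonnegative integers k <= n: sum_{i=k}^n [i choose k]_q * q^i/(1-q^i) = [n choose k]_q * q^k/(1-q^k), where k >= 1. -/
import Mathlib


open Finset

variable {F : Type*} [Field F]

/-- `(q;q)_n = (1-q)(1-q^2)...(1-q^n)` -/
def qfac (q : F) (n : ℕ) : F := ∏ j ∈ Finset.range n, (1 - q ^ (j + 1))

/-- `(z;q)_k = (1-z)(1-zq)...(1-zq^{k-1})` -/
def qpoch (z q : F) (k : ℕ) : F := ∏ j ∈ Finset.range k, (1 - z * q ^ j)

/-- Gaussian binomial coefficient `[n choose k]_q` -/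
def qbinom (q : F) (n k : ℕ) : F := qfac q n / (qfac q k * qfac q (n - k))

/-- Sum over weakly increasing `m`-tuples `lo ≤ i_1 ≤ ... ≤ i_m ≤ n` of
`∏_j q^{i_j}/(1-q^{i_j})` (equal to `1` when `m = 0`). -/
def chainSum (q : F) (lo n m : ℕ) : F :=
  ∑ c ∈ Finset.univ.filter (fun c : Fin m → Fin (n + 1) =>
      (∀ j k : Fin m, j ≤ k → c j ≤ c k) ∧ ∀ j, lo ≤ (c j : ℕ)),
    ∏ j, q ^ (c j : ℕ) / (1 - q ^ (c j : ℕ))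

/-- Complete homogeneous symmetric function `h_m` of the variables
`x lo, x (lo+1), ..., x n`. -/
def hSum {R : Type*} [CommRing R] (x : ℕ → R) (lo n m : ℕ) : R :=
  ∑ c ∈ Finset.univ.filter (fun c : Fin m → Fin (n + 1) =>
      (∀ j k : Fin m, j ≤ k → c j ≤ c k) ∧ ∀ j, lo ≤ (c j : ℕ)),
    ∏ j, x (c j : ℕ)

lemma one_sub_pow_ne (q : F) (hq : ∀ i : ℕ, 1 ≤ i → q ^ i ≠ 1) {i : ℕ} (hi : 1 ≤ i) :
    (1 : F) - q ^ i ≠ 0 := by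
  intro h
  exact hq i hi (sub_eq_zero.mp h).symm

lemma qfac_ne_zero (q : F) (hq : ∀ i : ℕ, 1 ≤ i → q ^ i ≠ 1) (m : ℕ) :
    qfac q m ≠ 0 := by
  unfold qfac
  exact Finset.prod_ne_zero_iff.mpr fun j _ => one_sub_pow_ne q hq (Nat.succ_le_succ (Nat.zero_le j))

lemma qfac_succ (q : F) (n : ℕ) : qfac q (n + 1) = qfac q n * (1 - q ^ (n + 1)) := by
  unfold qfac; exact Finset.prod_range_succ _ _


lemma key_step (A B C x y : F) (hA : A ≠ 0) (hB : B ≠ 0)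
    (hx : 1 - x ≠ 0) (hy : 1 - y ≠ 0) (hyx : 1 - y * x ≠ 0) :
    C / (A * B) * x / (1 - x) + C * (1 - y * x) / (A * (B * (1 - y))) * (y * x / (1 - y * x))
      = C * (1 - y * x) / (A * (B * (1 - y))) * x / (1 - x) := by
  have h1 : A * B * (1 - x) ≠ 0 := mul_ne_zero (mul_ne_zero hA hB) hx
  have h2 : A * (B * (1 - y)) * (1 - y * x) ≠ 0 :=
    mul_ne_zero (mul_ne_zero hA (mul_ne_zero hB hy)) hyx
  have h3 : A * (B * (1 - y)) * (1 - x) ≠ 0 :=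
    mul_ne_zero (mul_ne_zero hA (mul_ne_zero hB hy)) hx
  rw [div_mul_eq_mul_div C (A * B) x, div_div, div_mul_div_comm,
    div_add_div _ _ h1 h2, div_mul_eq_mul_div, div_div,
    div_eq_div_iff (mul_ne_zero h1 h2) h3]
  ring

theorem fu_lascoux_lemma2_m1 (q : F) (k n : ℕ) (hk : 1 ≤ k) (hkn : k ≤ n)
    (hq : ∀ i : ℕ, 1 ≤ i → q ^ i ≠ 1) :
    ∑ i ∈ Finset.Icc k n, qbinom q i k * (q ^ i / (1 - q ^ i))
      = qbinom q n k * q ^ k / (1 - q ^ k) := by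
  induction n, hkn using Nat.le_induction with
  | base =>
    rw [Finset.Icc_self, Finset.sum_singleton]
    unfold qbinom
    rw [Nat.sub_self]
    have h0 : qfac q 0 = 1 := by unfold qfac; simp
    rw [h0, mul_one, div_self (qfac_ne_zero q hq k), one_mul, one_mul]
  | succ n hn ih =>
    rw [Finset.sum_Icc_succ_top (by omega : k ≤ n + 1), ih]
    unfold qbinom
    have h1 : n + 1 - k = (n - k) + 1 := by omega
    rw [h1, qfac_succ, qfac_succ]
    have h2 : q ^ (n + 1) = q ^ (n - k + 1) * q ^ k := by
      rw [← pow_add]; congr 1; omega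
    have hk0 : (1 : F) - q ^ k ≠ 0 := one_sub_pow_ne q hq hk
    have hn1 : (1 : F) - q ^ (n + 1) ≠ 0 := one_sub_pow_ne q hq (by omega)
    have hnk : (1 : F) - q ^ (n - k + 1) ≠ 0 := one_sub_pow_ne q hq (by omega)
    have hfk : qfac q k ≠ 0 := qfac_ne_zero q hq k
    have hfnk : qfac q (n - k) ≠ 0 := qfac_ne_zero q hq (n - k)
    rw [h2]
    exact key_step (qfac q k) (qfac q (n - k)) (qfac q n) (q ^ k) (q ^ (n - k + 1))
      hfk hfnk hk0 hnk (h2 ▸ hn1)
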